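/- For every p ∈ ℂ with p ≠ 1/2 and every ω ∈ ℂ, I_p(ω/2) · I_{p/(2p−1)}(ω/2) = I_{p²/(2p−1)}(ω). -/

import Mathlib

/-- For `p, ω ∈ ℂ`, the entire function
`I_p(ω) = ∏_{n=1}^∞ (p + (1-p) e^{ω/2^n})` (index `n : ℕ` stands for `n+1 ≥ 1`). -/
noncomputable def Iprod (p ω : ℂ) : ℂ :=
  ∏' n : ℕ, (p + (1 - p) * Complex.exp (ω / 2 ^ (n + 1)))


open Filter Complex

lemma aux_mult (c z : ℂ) :
    Multipliable fun n : ℕ => 1 + c * (Complex.exp (z / 2 ^ (n + 1)) - 1) := by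
  set f : ℕ → ℂ := fun n => 1 + c * (Complex.exp (z / 2 ^ (n + 1)) - 1) with hf
  by_cases h0 : ∃ m, f m = 0
  · obtain ⟨m, hm⟩ := h0
    refine ⟨0, ?_⟩
    have hev : ∀ᶠ s : Finset ℕ in atTop, ∏ i ∈ s, f i = 0 := by
      filter_upwards [Filter.eventually_ge_atTop ({m} : Finset ℕ)] with s hs
      exact Finset.prod_eq_zero (hs (Finset.mem_singleton_self m)) hm
    exact tendsto_const_nhds.congr' (by filter_upwards [hev] with s h using h.symm)
  · push_neg at h0
    have := (fun (h : Unit → Summable fun n => Complex.log (f n)) =>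
      Complex.multipliable_of_summable_log (h ())) ?_
    · exact this
    intro _
    apply Summable.of_norm_bounded_eventually_nat
      (g := fun n => 3 * ‖c‖ * ‖z‖ * (1 / 2) ^ n)
      (by apply Summable.mul_left; exact summable_geometric_of_lt_one (by norm_num) (by norm_num))
    have h1 : Tendsto (fun n : ℕ => (1 / 2 : ℝ) ^ n) atTop (nhds 0) :=
      tendsto_pow_atTop_nhds_zero_of_lt_one (by norm_num) (by norm_num)
    have h2 : ∀ᶠ n : ℕ in atTop, ‖z‖ * (1 / 2) ^ n ≤ 1 := by
      have h1' : Tendsto (fun n : ℕ => ‖z‖ * (1 / 2 : ℝ) ^ n) atTop (nhds 0) := by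
        simpa using h1.const_mul ‖z‖
      exact h1'.eventually_le_const (show (0:ℝ) < 1 by norm_num)
    have h3 : ∀ᶠ n : ℕ in atTop, ‖c‖ * ‖z‖ * (1 / 2) ^ n ≤ 1 / 2 := by
      have h1' : Tendsto (fun n : ℕ => ‖c‖ * ‖z‖ * (1 / 2 : ℝ) ^ n) atTop (nhds 0) := by
        simpa using h1.const_mul (‖c‖ * ‖z‖)
      exact h1'.eventually_le_const (show (0:ℝ) < 1/2 by norm_num)
    filter_upwards [h2, h3] with n hn2 hn3
    have hw : ‖z / 2 ^ (n + 1)‖ = ‖z‖ * (1 / 2) ^ (n + 1) := by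
      rw [norm_div, norm_pow, Complex.norm_ofNat]
      rw [one_div, inv_pow, div_eq_mul_inv]
    have hwle : ‖z / 2 ^ (n + 1)‖ ≤ 1 := by
      rw [hw]
      calc ‖z‖ * (1/2) ^ (n+1) ≤ ‖z‖ * (1/2) ^ n := by
            apply mul_le_mul_of_nonneg_left _ (norm_nonneg z)
            exact pow_le_pow_of_le_one (by norm_num) (by norm_num) (Nat.le_succ n)
        _ ≤ 1 := hn2
    have hexp : ‖Complex.exp (z / 2 ^ (n + 1)) - 1‖ ≤ 2 * ‖z / 2 ^ (n + 1)‖ :=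
      Complex.norm_exp_sub_one_le hwle
    have hu : ‖c * (Complex.exp (z / 2 ^ (n + 1)) - 1)‖ ≤ ‖c‖ * ‖z‖ * (1 / 2) ^ n := by
      rw [norm_mul]
      calc ‖c‖ * ‖Complex.exp (z / 2 ^ (n + 1)) - 1‖
          ≤ ‖c‖ * (2 * ‖z / 2 ^ (n + 1)‖) :=
            mul_le_mul_of_nonneg_left hexp (norm_nonneg c)
        _ = ‖c‖ * ‖z‖ * (1 / 2) ^ n := by rw [hw]; ring
    have hu2 : ‖c * (Complex.exp (z / 2 ^ (n + 1)) - 1)‖ ≤ 1 / 2 := hu.trans hn3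
    calc ‖Complex.log (f n)‖
        ≤ 3 / 2 * ‖c * (Complex.exp (z / 2 ^ (n + 1)) - 1)‖ :=
          Complex.norm_log_one_add_half_le_self hu2
      _ ≤ 3 / 2 * (‖c‖ * ‖z‖ * (1 / 2) ^ n) := by
          apply mul_le_mul_of_nonneg_left hu (by norm_num)
      _ ≤ 3 * ‖c‖ * ‖z‖ * (1 / 2) ^ n := by
          have : (0:ℝ) ≤ ‖c‖ * ‖z‖ * (1 / 2) ^ n := by positivity
          nlinarith

lemma mult' (p ω : ℂ) :
    Multipliable fun n : ℕ => p + (1 - p) * Complex.exp (ω / 2 ^ (n + 1)) := by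
  have h : (fun n : ℕ => p + (1 - p) * Complex.exp (ω / 2 ^ (n + 1)))
      = fun n : ℕ => 1 + (1 - p) * (Complex.exp (ω / 2 ^ (n + 1)) - 1) := by
    funext n; ring
  rw [h]
  exact aux_mult (1 - p) ω

/-- For every `p ∈ ℂ` with `p ≠ 1/2` and every `ω ∈ ℂ`,
`I_p(ω/2) · I_{p/(2p-1)}(ω/2) = I_{p²/(2p-1)}(ω)`. -/
theorem stmt12 (p : ℂ) (hp : p ≠ 1 / 2) (ω : ℂ) :
    Iprod p (ω / 2) * Iprod (p / (2 * p - 1)) (ω / 2) = Iprod (p ^ 2 / (2 * p - 1)) ω := by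
  have h2p : (2 * p - 1) ≠ 0 := by
    intro h
    exact hp (by linear_combination h / 2)
  have hf := mult' p (ω / 2)
  have hg := mult' (p / (2 * p - 1)) (ω / 2)
  unfold Iprod
  rw [← Multipliable.tprod_mul hf hg]
  apply tprod_congr
  intro n
  have hexp : Complex.exp (ω / 2 / 2 ^ (n + 1)) * Complex.exp (ω / 2 / 2 ^ (n + 1))
      = Complex.exp (ω / 2 ^ (n + 1)) := by
    rw [← Complex.exp_add]
    congr 1
    field_simp
    ring
  show (p + (1 - p) * Complex.exp (ω / 2 / 2 ^ (n + 1))) *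
      (p / (2 * p - 1) + (1 - p / (2 * p - 1)) * Complex.exp (ω / 2 / 2 ^ (n + 1)))
      = p ^ 2 / (2 * p - 1) + (1 - p ^ 2 / (2 * p - 1)) * Complex.exp (ω / 2 ^ (n + 1))
  rw [← hexp]
  simp only [div_eq_mul_inv]
  linear_combination p * (Complex.exp (ω * 2⁻¹ * (2 ^ (n + 1))⁻¹) ^ 2
    - Complex.exp (ω * 2⁻¹ * (2 ^ (n + 1))⁻¹)) * (mul_inv_cancel₀ h2p)
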